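/- For positive reals x₁, x₂ and p ∈ ℝ, the second derivative of L(p) = (x₁^p + x₂^p)/(x₁^(p-1) + x₂^(p-1)) equals x₁·(a−1)·(log a)²·a^p·(a − a^p)/(a^p + a)³, where a = x₁/x₂. -/

import Mathlib

open Real

theorem lehmer_second_deriv_two (x₁ x₂ : ℝ) (hx₁ : 0 < x₁) (hx₂ : 0 < x₂) (p : ℝ) :
    iteratedDeriv 2
      (fun q : ℝ => (x₁ ^ q + x₂ ^ q) / (x₁ ^ (q - 1) + x₂ ^ (q - 1))) p =
      x₁ * (x₁ / x₂ - 1) * (Real.log (x₁ / x₂)) ^ 2 * (x₁ / x₂) ^ p *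
        ((x₁ / x₂) - (x₁ / x₂) ^ p) / ((x₁ / x₂) ^ p + x₁ / x₂) ^ 3 := by
  set a : ℝ := x₁ / x₂ with ha_def
  have ha : 0 < a := div_pos hx₁ hx₂
  set L : ℝ := Real.log a with hL_def
  -- Rewrite the function
  have hfun : (fun q : ℝ => (x₁ ^ q + x₂ ^ q) / (x₁ ^ (q - 1) + x₂ ^ (q - 1)))
      = fun q : ℝ => x₁ * ((a ^ q + 1) / (a ^ q + a)) := by
    funext q
    have hx1 : x₁ = a * x₂ := by rw [ha_def]; field_simp
    have h1 : x₁ ^ q = a ^ q * x₂ ^ q := by rw [hx1, Real.mul_rpow ha.le hx₂.le]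
    have h2 : x₁ ^ (q - 1) = a ^ (q - 1) * x₂ ^ (q - 1) := by
      rw [hx1, Real.mul_rpow ha.le hx₂.le]
    have h3 : a ^ (q - 1) = a ^ q / a := by
      rw [Real.rpow_sub ha, Real.rpow_one]
    have h4 : x₂ ^ (q - 1) = x₂ ^ q / x₂ := by
      rw [Real.rpow_sub hx₂, Real.rpow_one]
    have hau : (0:ℝ) < a ^ q := Real.rpow_pos_of_pos ha q
    have hxu : (0:ℝ) < x₂ ^ q := Real.rpow_pos_of_pos hx₂ q
    have hden : a ^ q + a ≠ 0 := by positivity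
    rw [h1, h2, h3, h4, hx1]
    field_simp
  rw [hfun]
  have hu : ∀ q : ℝ, HasDerivAt (fun t : ℝ => a ^ t) (a ^ q * L) q :=
    fun q => (Real.hasStrictDerivAt_const_rpow ha q).hasDerivAt
  have hden : ∀ q : ℝ, a ^ q + a ≠ 0 := fun q => by
    have := Real.rpow_pos_of_pos ha q; positivity
  -- first derivative
  have hd1 : ∀ q : ℝ, HasDerivAt (fun t : ℝ => x₁ * ((a ^ t + 1) / (a ^ t + a)))
      (x₁ * L * (a - 1) * a ^ q / (a ^ q + a) ^ 2) q := by
    intro q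
    have h := (((hu q).add_const 1).div ((hu q).add_const a) (hden q)).const_mul x₁
    refine h.congr_deriv ?_
    field_simp
    ring
  have hderiv1 : deriv (fun t : ℝ => x₁ * ((a ^ t + 1) / (a ^ t + a)))
      = fun q : ℝ => x₁ * L * (a - 1) * a ^ q / (a ^ q + a) ^ 2 := by
    funext q; exact (hd1 q).deriv
  -- second derivative
  have hd2 : HasDerivAt (fun q : ℝ => x₁ * L * (a - 1) * a ^ q / (a ^ q + a) ^ 2)
      (x₁ * (a - 1) * L ^ 2 * a ^ p * (a - a ^ p) / (a ^ p + a) ^ 3) p := by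
    have hpow : HasDerivAt (fun q : ℝ => (a ^ q + a) ^ 2)
        (2 * (a ^ p + a) ^ 1 * (a ^ p * L)) p := ((hu p).add_const a).pow 2
    have hden2 : ((a ^ p + a) ^ 2 : ℝ) ≠ 0 := pow_ne_zero 2 (hden p)
    have h := (((hu p).const_mul (x₁ * L * (a - 1))).div hpow hden2)
    refine h.congr_deriv ?_
    have h0 := hden p
    field_simp
    ring
  rw [show (2:ℕ) = 1 + 1 from rfl, iteratedDeriv_succ, iteratedDeriv_one, hderiv1]
  exact hd2.deriv
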